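/- Under the centered model with M_Z > 3 and for any λ ≥ 1, let S₂ = {(0, β) : μ^⊤β = 0, ‖β‖₂² = 1/M_Z} ∪ {(0, 0)} and u = (0, μ/‖μ‖₂) ∈ ℝ × ℝ^d. Then for every γ ∈ S₂, u^⊤ ∇²L^h_λ(γ) u ≤ −(1 − 3/M_Z)‖μ‖₂² < 0; i.e., every stationary point in S₂ is a strict saddle whose Hessian has a negative eigenvalue. -/

import Mathlib

open MeasureTheory ProbabilityTheory
open scoped RealInnerProductSpace

/-- `ℝ^d` with the Euclidean norm. -/
abbrev Vec (d : ℕ) := EuclideanSpace ℝ (Fin d)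

/-- `ℝ × ℝ^d` with the Euclidean (ℓ²) norm, the domain of the loss `(α, β) ↦ L(α, β)`. -/
abbrev Pr (d : ℕ) := WithLp 2 (ℝ × Vec d)

/-- Build the point `(α, β) ∈ ℝ × ℝ^d`. -/
noncomputable def mkp {d : ℕ} (α : ℝ) (β : Vec d) : Pr d :=
  (WithLp.equiv 2 (ℝ × Vec d)).symm (α, β)

/-- The quartic loss `h(x) = (x² - 1)² / 4`. -/
noncomputable def hq (x : ℝ) : ℝ := (x ^ 2 - 1) ^ 2 / 4

/-- The population loss `γ = (α, β) ↦ E g(α + β⊤X) + (λ/2) α²` built from a scalar loss `g`. -/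
noncomputable def popLoss {d : ℕ} {Ω : Type*} [MeasurableSpace Ω] (P : Measure Ω)
    (X : Ω → Vec d) (g : ℝ → ℝ) (lam : ℝ) (γ : Pr d) : ℝ :=
  (∫ ω, g ((WithLp.equiv 2 (ℝ × Vec d) γ).1 + ⟪(WithLp.equiv 2 (ℝ × Vec d) γ).2, X ω⟫) ∂P)
    + lam / 2 * ((WithLp.equiv 2 (ℝ × Vec d) γ).1) ^ 2


/-! ### Auxiliary lemmas -/

lemma abs_monomial_le (x y : ℝ) {i j : ℕ} (h : i + j ≤ 4) :
    |x ^ i * y ^ j| ≤ 1 + x ^ 4 + y ^ 4 := by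
  set m := max 1 (max |x| |y|) with hm
  have h1 : (1:ℝ) ≤ m := le_max_left _ _
  have hxm : |x| ≤ m := le_trans (le_max_left _ _) (le_max_right _ _)
  have hym : |y| ≤ m := le_trans (le_max_right _ _) (le_max_right _ _)
  calc |x ^ i * y ^ j| = |x| ^ i * |y| ^ j := by rw [abs_mul, abs_pow, abs_pow]
    _ ≤ m ^ i * m ^ j := by
        exact mul_le_mul (pow_le_pow_left₀ (abs_nonneg x) hxm i)
          (pow_le_pow_left₀ (abs_nonneg y) hym j) (by positivity) (by positivity)
    _ = m ^ (i + j) := (pow_add m i j).symm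
    _ ≤ m ^ 4 := pow_le_pow_right₀ h1 h
    _ ≤ 1 + x ^ 4 + y ^ 4 := by
        have hx4 : |x| ^ 4 = x ^ 4 := by rw [pow_abs, abs_of_nonneg (by positivity)]
        have hy4 : |y| ^ 4 = y ^ 4 := by rw [pow_abs, abs_of_nonneg (by positivity)]
        rcases max_cases 1 (max |x| |y|) with ⟨he, _⟩ | ⟨he, _⟩
        · rw [hm, he]; nlinarith [pow_nonneg (abs_nonneg x) 4, pow_nonneg (abs_nonneg y) 4]
        · rcases max_cases |x| |y| with ⟨he2, _⟩ | ⟨he2, _⟩ <;> rw [hm, he, he2] <;>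
            nlinarith [pow_nonneg (abs_nonneg x) 4, pow_nonneg (abs_nonneg y) 4]

lemma integrable_inner_pow4 {d : ℕ} {Ω : Type*} [MeasurableSpace Ω] (P : Measure Ω)
    [IsProbabilityMeasure P] {Z : Ω → Vec d} {M : ℝ}
    (hZsg : ∀ u : Vec d, ‖u‖ = 1 → ∀ p : ℝ, 1 ≤ p →
      Integrable (fun ω => |⟪u, Z ω⟫| ^ p) P ∧
        (∫ ω, |⟪u, Z ω⟫| ^ p ∂P) ^ (1 / p) ≤ Real.sqrt p * M)
    (w : Vec d) : Integrable (fun ω => ⟪w, Z ω⟫ ^ 4) P := by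
  rcases eq_or_ne w 0 with rfl | hw
  · simp only [inner_zero_left]; simp
  · set u : Vec d := ‖w‖⁻¹ • w with hu
    have hw0 : ‖w‖ ≠ 0 := norm_ne_zero_iff.mpr hw
    have hun : ‖u‖ = 1 := by
      rw [hu, norm_smul, norm_inv, norm_norm, inv_mul_cancel₀ hw0]
    have h4 := (hZsg u hun 4 (by norm_num)).1
    have heq : (fun ω => |⟪u, Z ω⟫| ^ (4:ℝ)) = fun ω => ⟪u, Z ω⟫ ^ 4 := by
      funext ω
      rw [show (4:ℝ) = ((4:ℕ):ℝ) by norm_num, Real.rpow_natCast, pow_abs,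
      abs_of_nonneg (by positivity)]
    rw [heq] at h4
    have hwe : ∀ ω, ⟪w, Z ω⟫ ^ 4 = ‖w‖ ^ 4 * ⟪u, Z ω⟫ ^ 4 := by
      intro ω
      have : ⟪u, Z ω⟫ = ‖w‖⁻¹ * ⟪w, Z ω⟫ := by rw [hu, real_inner_smul_left]
      rw [this]; field_simp
    simp only [hwe]
    exact h4.const_mul (‖w‖ ^ 4)

lemma integrable_inner_monomial {d : ℕ} {Ω : Type*} [MeasurableSpace Ω] (P : Measure Ω)
    [IsProbabilityMeasure P] {Z : Ω → Vec d} (hZ : Measurable Z) {M : ℝ}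
    (hZsg : ∀ u : Vec d, ‖u‖ = 1 → ∀ p : ℝ, 1 ≤ p →
      Integrable (fun ω => |⟪u, Z ω⟫| ^ p) P ∧
        (∫ ω, |⟪u, Z ω⟫| ^ p ∂P) ^ (1 / p) ≤ Real.sqrt p * M)
    (a b : Vec d) {i j : ℕ} (hij : i + j ≤ 4) :
    Integrable (fun ω => ⟪a, Z ω⟫ ^ i * ⟪b, Z ω⟫ ^ j) P := by
  have hg : Integrable (fun ω => 1 + ⟪a, Z ω⟫ ^ 4 + ⟪b, Z ω⟫ ^ 4) P :=
    ((integrable_const 1).add (integrable_inner_pow4 P hZsg a)).add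
      (integrable_inner_pow4 P hZsg b)
  refine Integrable.mono' hg ?_ (ae_of_all _ fun ω => ?_)
  · exact (((measurable_const.inner hZ).pow_const i).mul
      ((measurable_const.inner hZ).pow_const j)).aestronglyMeasurable
  · exact abs_monomial_le _ _ hij

lemma cross_moment {d : ℕ} {Ω : Type*} [MeasurableSpace Ω] (P : Measure Ω)
    [IsProbabilityMeasure P] {Z : Ω → Vec d} (hZ : Measurable Z) {M MZ : ℝ}
    (hZsg : ∀ u : Vec d, ‖u‖ = 1 → ∀ p : ℝ, 1 ≤ p →
      Integrable (fun ω => |⟪u, Z ω⟫| ^ p) P ∧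
        (∫ ω, |⟪u, Z ω⟫| ^ p ∂P) ^ (1 / p) ≤ Real.sqrt p * M)
    (hMZ : ∀ u : Vec d, ‖u‖ = 1 → (∫ ω, ⟪u, Z ω⟫ ^ 4 ∂P) = MZ)
    (a b : Vec d) (ha : ‖a‖ = 1) (hb : ‖b‖ = 1) (hab : ⟪a, b⟫ = 0) :
    (∫ ω, ⟪a, Z ω⟫ ^ 2 * ⟪b, Z ω⟫ ^ 2 ∂P) = MZ / 3 := by
  set s : ℝ := Real.sqrt 2 with hsdef
  have hs2 : s ^ 2 = 2 := Real.sq_sqrt (by norm_num)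
  have hs0 : 0 < s := Real.sqrt_pos.mpr (by norm_num)
  set wp : Vec d := s⁻¹ • (a + b) with hwp
  set wm : Vec d := s⁻¹ • (a - b) with hwm
  have hnp : ‖a + b‖ = s := by
    have h2 : ‖a + b‖ ^ 2 = 2 := by
      rw [norm_add_sq_real, ha, hb, hab]; norm_num
    rw [← Real.sqrt_sq (norm_nonneg (a + b)), h2]
  have hnm : ‖a - b‖ = s := by
    have h2 : ‖a - b‖ ^ 2 = 2 := by
      rw [norm_sub_sq_real, ha, hb, hab]; norm_num
    rw [← Real.sqrt_sq (norm_nonneg (a - b)), h2]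
  have hup : ‖wp‖ = 1 := by
    rw [hwp, norm_smul, norm_inv, Real.norm_eq_abs, abs_of_pos hs0, hnp,
      inv_mul_cancel₀ hs0.ne']
  have hum : ‖wm‖ = 1 := by
    rw [hwm, norm_smul, norm_inv, Real.norm_eq_abs, abs_of_pos hs0, hnm,
      inv_mul_cancel₀ hs0.ne']
  have hinv4 : (s⁻¹) ^ 4 = 4⁻¹ := by
    rw [inv_pow]
    congr 1
    nlinarith [hs2]
  have hpt : ∀ ω, ⟪wp, Z ω⟫ ^ 4 + ⟪wm, Z ω⟫ ^ 4 =
      ⟪a, Z ω⟫ ^ 4 * (1/2) + (⟪b, Z ω⟫ ^ 4 * (1/2)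
        + (⟪a, Z ω⟫ ^ 2 * ⟪b, Z ω⟫ ^ 2) * 3) := by
    intro ω
    have h1 : ⟪wp, Z ω⟫ = s⁻¹ * (⟪a, Z ω⟫ + ⟪b, Z ω⟫) := by
      rw [hwp, real_inner_smul_left, inner_add_left]
    have h2 : ⟪wm, Z ω⟫ = s⁻¹ * (⟪a, Z ω⟫ - ⟪b, Z ω⟫) := by
      rw [hwm, real_inner_smul_left, inner_sub_left]
    rw [h1, h2, mul_pow, mul_pow, hinv4]
    ring
  have hIa : Integrable (fun ω => ⟪a, Z ω⟫ ^ 4 * (1/2)) P :=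
    (integrable_inner_pow4 P hZsg a).mul_const _
  have hIb : Integrable (fun ω => ⟪b, Z ω⟫ ^ 4 * (1/2)) P :=
    (integrable_inner_pow4 P hZsg b).mul_const _
  have hIab : Integrable (fun ω => (⟪a, Z ω⟫ ^ 2 * ⟪b, Z ω⟫ ^ 2) * 3) P :=
    (integrable_inner_monomial P hZ hZsg a b (by norm_num : 2 + 2 ≤ 4)).mul_const _
  have hL : (∫ ω, (⟪wp, Z ω⟫ ^ 4 + ⟪wm, Z ω⟫ ^ 4) ∂P) = MZ + MZ := by
    rw [integral_add (integrable_inner_pow4 P hZsg wp) (integrable_inner_pow4 P hZsg wm),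
      hMZ wp hup, hMZ wm hum]
  have hR : (∫ ω, (⟪wp, Z ω⟫ ^ 4 + ⟪wm, Z ω⟫ ^ 4) ∂P)
      = MZ * (1/2) + (MZ * (1/2) + (∫ ω, ⟪a, Z ω⟫ ^ 2 * ⟪b, Z ω⟫ ^ 2 ∂P) * 3) := by
    rw [show (fun ω => ⟪wp, Z ω⟫ ^ 4 + ⟪wm, Z ω⟫ ^ 4)
        = fun ω => ⟪a, Z ω⟫ ^ 4 * (1/2) + (⟪b, Z ω⟫ ^ 4 * (1/2)
          + (⟪a, Z ω⟫ ^ 2 * ⟪b, Z ω⟫ ^ 2) * 3) from funext hpt]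
    have hIbc : Integrable (fun ω => ⟪b, Z ω⟫ ^ 4 * (1/2)
        + (⟪a, Z ω⟫ ^ 2 * ⟪b, Z ω⟫ ^ 2) * 3) P := hIb.add hIab
    rw [integral_add hIa hIbc, integral_add hIb hIab,
      integral_mul_const, integral_mul_const, integral_mul_const,
      hMZ a ha, hMZ b hb]
  rw [hR] at hL
  linarith

lemma expY_eq_zero {Ω : Type*} [MeasurableSpace Ω] (P : Measure Ω)
    [IsProbabilityMeasure P] {Y : Ω → ℝ} (hY : Measurable Y)
    (hYpm : ∀ ω, Y ω = 1 ∨ Y ω = -1)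
    (hY1 : P {ω | Y ω = 1} = 1 / 2) (hY2 : P {ω | Y ω = -1} = 1 / 2) :
    (∫ ω, Y ω ∂P) = 0 := by
  have hSmeas : MeasurableSet {ω | Y ω = 1} := hY (measurableSet_singleton 1)
  have hcompl : {ω | Y ω = -1} = {ω | Y ω = 1}ᶜ := by
    ext ω; rcases hYpm ω with h | h <;> simp [h] <;> norm_num
  have hIntY : Integrable Y P := by
    refine Integrable.mono' (integrable_const 1) hY.aestronglyMeasurable
      (ae_of_all _ fun ω => ?_)
    rcases hYpm ω with h | h <;> simp [h]
  have hsplit := (integral_add_compl hSmeas hIntY).symm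
  have h1 : ∫ ω in {ω | Y ω = 1}, Y ω ∂P = (1:ℝ)/2 := by
    rw [setIntegral_congr_fun hSmeas (fun ω hω => hω)]
    simp [measureReal_def, hY1]
  have h2 : ∫ ω in {ω | Y ω = 1}ᶜ, Y ω ∂P = -((1:ℝ)/2) := by
    have he : ∫ ω in {ω | Y ω = 1}ᶜ, Y ω ∂P = ∫ _ in {ω | Y ω = 1}ᶜ, (-1:ℝ) ∂P :=
      setIntegral_congr_fun hSmeas.compl (fun ω hω => by
        rcases hYpm ω with h | h
        · exact absurd h hω
        · exact h)
    rw [he, setIntegral_const, ← hcompl, measureReal_def, hY2]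
    simp [ENNReal.toReal_div]
  rw [hsplit, h1, h2]; ring

lemma indep_mul_zero {d : ℕ} {Ω : Type*} [MeasurableSpace Ω] (P : Measure Ω)
    [IsProbabilityMeasure P] {Y : Ω → ℝ} {Z : Ω → Vec d}
    (hY : Measurable Y) (hZ : Measurable Z)
    (hindep : IndepFun Y Z P) (hEY : (∫ ω, Y ω ∂P) = 0)
    (φ : Vec d → ℝ) (hφ : Measurable φ) :
    (∫ ω, Y ω * φ (Z ω) ∂P) = 0 := by
  have h := IndepFun.integral_mul_eq_mul_integral (hindep.comp measurable_id hφ)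
    hY.aestronglyMeasurable ((hφ.comp hZ).aestronglyMeasurable)
  have h2 : (∫ ω, Y ω * φ (Z ω) ∂P) = (∫ ω, Y ω ∂P) * (∫ ω, φ (Z ω) ∂P) := h
  rw [h2, hEY, zero_mul]

lemma iteratedDeriv_two_quartic (c0 c1 c2 c3 c4 : ℝ) :
    iteratedDeriv 2 (fun t : ℝ => c0 + c1 * t + c2 * t ^ 2 + c3 * t ^ 3 + c4 * t ^ 4) 0
      = 2 * c2 := by
  have hq : (fun t : ℝ => c0 + c1 * t + c2 * t ^ 2 + c3 * t ^ 3 + c4 * t ^ 4)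
      = fun t : ℝ => Polynomial.eval t
        (Polynomial.C c0 + Polynomial.C c1 * Polynomial.X
          + Polynomial.C c2 * Polynomial.X ^ 2
          + Polynomial.C c3 * Polynomial.X ^ 3
          + Polynomial.C c4 * Polynomial.X ^ 4) := by
    funext t; simp
  rw [hq, iteratedDeriv_succ, iteratedDeriv_one]
  have hd : (deriv fun t : ℝ => Polynomial.eval t
      (Polynomial.C c0 + Polynomial.C c1 * Polynomial.X
        + Polynomial.C c2 * Polynomial.X ^ 2
        + Polynomial.C c3 * Polynomial.X ^ 3
        + Polynomial.C c4 * Polynomial.X ^ 4))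
      = fun t : ℝ => Polynomial.eval t (Polynomial.derivative
        (Polynomial.C c0 + Polynomial.C c1 * Polynomial.X
          + Polynomial.C c2 * Polynomial.X ^ 2
          + Polynomial.C c3 * Polynomial.X ^ 3
          + Polynomial.C c4 * Polynomial.X ^ 4)) := by
    funext t; exact Polynomial.deriv _
  rw [hd, Polynomial.deriv]
  simp
  ring

set_option maxHeartbeats 2000000 in
/-- under the centered model with `M_Z > 3` and `λ ≥ 1`, at every point of
`S₂ = {(0, β) : μ⊤β = 0, ‖β‖² = 1/M_Z} ∪ {(0,0)}` the Hessian of `L^h_λ` in the direction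
`u = (0, μ/‖μ‖)` is at most `−(1 − 3/M_Z)‖μ‖² < 0`: every point of `S₂` is a strict saddle. -/
theorem quartic_population_loss_strict_saddles
    {d : ℕ} {Ω : Type*} [MeasurableSpace Ω] (P : Measure Ω) [IsProbabilityMeasure P]
    (Y : Ω → ℝ) (Z : Ω → Vec d) (X : Ω → Vec d) (μ : Vec d) (M MZ lam : ℝ)
    (hμ : μ ≠ 0) (hlam : 0 ≤ lam)
    (hY : Measurable Y) (hZ : Measurable Z)
    (hYpm : ∀ ω, Y ω = 1 ∨ Y ω = -1)
    (hY1 : P {ω | Y ω = 1} = 1 / 2) (hY2 : P {ω | Y ω = -1} = 1 / 2)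
    (hindep : IndepFun Y Z P)
    (hZsg : ∀ u : Vec d, ‖u‖ = 1 → ∀ p : ℝ, 1 ≤ p →
      Integrable (fun ω => |⟪u, Z ω⟫| ^ p) P ∧
        (∫ ω, |⟪u, Z ω⟫| ^ p ∂P) ^ (1 / p) ≤ Real.sqrt p * M)
    (hZmean : (∫ ω, Z ω ∂P) = 0)
    (hZcov : ∀ u v : Vec d, (∫ ω, ⟪u, Z ω⟫ * ⟪v, Z ω⟫ ∂P) = ⟪u, v⟫)
    (hZsym : ∀ O : Vec d ≃ₗᵢ[ℝ] Vec d,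
      Measure.map (fun ω => O (Z ω)) P = Measure.map Z P)
    (hMZ : ∀ u : Vec d, ‖u‖ = 1 → (∫ ω, ⟪u, Z ω⟫ ^ 4 ∂P) = MZ)
    (hX : ∀ ω, X ω = Y ω • μ + Z ω)
    (hMZ3 : 3 < MZ) (hlam1 : 1 ≤ lam) :
    (-(1 - 3 / MZ) * ‖μ‖ ^ 2 < 0) ∧
    ∀ γ ∈ ({γ : Pr d | ∃ β : Vec d, γ = mkp 0 β ∧ ⟪μ, β⟫ = 0 ∧ ‖β‖ ^ 2 = 1 / MZ}
        ∪ {mkp 0 0} : Set (Pr d)),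
      iteratedDeriv 2
          (fun t : ℝ => popLoss P X hq lam (γ + t • mkp 0 (‖μ‖⁻¹ • μ))) 0
        ≤ -(1 - 3 / MZ) * ‖μ‖ ^ 2 := by
  have hμn : (0:ℝ) < ‖μ‖ := norm_pos_iff.mpr hμ
  have hμ0 : ‖μ‖ ≠ 0 := hμn.ne'
  have hMZ0 : (0:ℝ) < MZ := by linarith
  constructor
  · have h3 : 3 / MZ < 1 := (div_lt_one hMZ0).mpr hMZ3
    nlinarith [pow_pos hμn 2]
  intro γ hγ
  -- unify the two cases
  obtain ⟨β, hγβ, horth, hcase⟩ :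
      ∃ β : Vec d, γ = mkp 0 β ∧ ⟪μ, β⟫ = 0 ∧ (‖β‖ ^ 2 = 1 / MZ ∨ β = 0) := by
    rcases hγ with ⟨β, h1, h2, h3⟩ | h0
    · exact ⟨β, h1, h2, Or.inl h3⟩
    · exact ⟨0, h0, by simp, Or.inr rfl⟩
  set v : Vec d := ‖μ‖⁻¹ • μ with hv
  have hv1 : ‖v‖ = 1 := by
    rw [hv, norm_smul, norm_inv, norm_norm, inv_mul_cancel₀ hμ0]
  have hvμ : ⟪v, μ⟫ = ‖μ‖ := by
    rw [hv, real_inner_smul_left, real_inner_self_eq_norm_sq]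
    field_simp
  have hβμ : ⟪β, μ⟫ = 0 := by rw [real_inner_comm]; exact horth
  have hβv : ⟪β, v⟫ = 0 := by
    rw [hv, real_inner_smul_right, hβμ, mul_zero]
  -- inner products with X
  have e3 : ∀ ω, ⟪β, X ω⟫ = ⟪β, Z ω⟫ := by
    intro ω
    rw [hX ω, inner_add_right, real_inner_smul_right, hβμ, mul_zero, zero_add]
  have e4 : ∀ ω, ⟪v, X ω⟫ = Y ω * ‖μ‖ + ⟪v, Z ω⟫ := by
    intro ω
    rw [hX ω, inner_add_right, real_inner_smul_right, hvμ]
  -- rewrite the loss function along the line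
  have hfun : (fun t : ℝ => popLoss P X hq lam (γ + t • mkp 0 v))
      = fun t : ℝ => ∫ ω, hq (⟪β, Z ω⟫ + t * (Y ω * ‖μ‖ + ⟪v, Z ω⟫)) ∂P := by
    funext t
    rw [hγβ]
    simp only [popLoss]
    have eq1 : (WithLp.equiv 2 (ℝ × Vec d) (mkp 0 β + t • mkp 0 v)).1 = 0 := by
      show (0:ℝ) + t • (0:ℝ) = 0
      simp
    have eq2 : (WithLp.equiv 2 (ℝ × Vec d) (mkp 0 β + t • mkp 0 v)).2 = β + t • v := rfl
    rw [eq1, eq2]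
    simp only [zero_add, inner_add_left, real_inner_smul_left, e3, e4]
    norm_num
  -- integrability of monomials in a = ⟪β,Z⟫ and b = Y‖μ‖ + ⟪v,Z⟫
  have hInta4 : Integrable (fun ω => ⟪β, Z ω⟫ ^ 4) P := integrable_inner_pow4 P hZsg β
  have hmb : Measurable (fun ω => Y ω * ‖μ‖ + ⟪v, Z ω⟫) :=
    (hY.mul_const _).add (measurable_const.inner hZ)
  have hIntb4 : Integrable (fun ω => (Y ω * ‖μ‖ + ⟪v, Z ω⟫) ^ 4) P := by
    have hgb : Integrable (fun ω => 8 * ‖μ‖ ^ 4 + 8 * ⟪v, Z ω⟫ ^ 4) P :=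
      (integrable_const (8 * ‖μ‖ ^ 4)).add ((integrable_inner_pow4 P hZsg v).const_mul 8)
    refine Integrable.mono' hgb
      (hmb.pow_const 4).aestronglyMeasurable (ae_of_all _ fun ω => ?_)
    have h4 : |(Y ω * ‖μ‖ + ⟪v, Z ω⟫) ^ 4| = (Y ω * ‖μ‖ + ⟪v, Z ω⟫) ^ 4 :=
      abs_of_nonneg (by positivity)
    rw [Real.norm_eq_abs, h4]
    rcases hYpm ω with h | h <;> rw [h] <;>
        nlinarith [sq_nonneg (‖μ‖ + ⟪v, Z ω⟫), sq_nonneg (‖μ‖ - ⟪v, Z ω⟫),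
          sq_nonneg (‖μ‖ ^ 2 - ⟪v, Z ω⟫ ^ 2), sq_nonneg (‖μ‖ ^ 2 + ⟪v, Z ω⟫ ^ 2),
          sq_nonneg (‖μ‖ * ⟪v, Z ω⟫)]
  have hmono : ∀ i j : ℕ, i + j ≤ 4 →
      Integrable (fun ω => ⟪β, Z ω⟫ ^ i * (Y ω * ‖μ‖ + ⟪v, Z ω⟫) ^ j) P := by
    intro i j hij
    have hg : Integrable (fun ω => 1 + ⟪β, Z ω⟫ ^ 4 + (Y ω * ‖μ‖ + ⟪v, Z ω⟫) ^ 4) P :=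
      ((integrable_const 1).add hInta4).add hIntb4
    refine Integrable.mono' hg ?_ (ae_of_all _ fun ω => abs_monomial_le _ _ hij)
    exact (((measurable_const.inner hZ).pow_const i).mul (hmb.pow_const j)).aestronglyMeasurable
  have h40 : Integrable (fun ω => ⟪β, Z ω⟫ ^ 4) P := hInta4
  have h20 : Integrable (fun ω => ⟪β, Z ω⟫ ^ 2) P := by
    simpa using hmono 2 0 (by norm_num)
  have h31 : Integrable (fun ω => ⟪β, Z ω⟫ ^ 3 * (Y ω * ‖μ‖ + ⟪v, Z ω⟫)) P := by
    simpa using hmono 3 1 (by norm_num)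
  have h11 : Integrable (fun ω => ⟪β, Z ω⟫ * (Y ω * ‖μ‖ + ⟪v, Z ω⟫)) P := by
    simpa using hmono 1 1 (by norm_num)
  have h22 : Integrable (fun ω => ⟪β, Z ω⟫ ^ 2 * (Y ω * ‖μ‖ + ⟪v, Z ω⟫) ^ 2) P := by
    simpa using hmono 2 2 (by norm_num)
  have h02 : Integrable (fun ω => (Y ω * ‖μ‖ + ⟪v, Z ω⟫) ^ 2) P := by
    simpa using hmono 0 2 (by norm_num)
  have h13 : Integrable (fun ω => ⟪β, Z ω⟫ * (Y ω * ‖μ‖ + ⟪v, Z ω⟫) ^ 3) P := by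
    simpa using hmono 1 3 (by norm_num)
  have h04 : Integrable (fun ω => (Y ω * ‖μ‖ + ⟪v, Z ω⟫) ^ 4) P := hIntb4
  -- the quartic expansion of the loss along the line
  have hP0 : Integrable (fun ω => (⟪β, Z ω⟫ ^ 2 - 1) ^ 2 / 4) P := by
    have he : (fun ω => (⟪β, Z ω⟫ ^ 2 - 1) ^ 2 / 4)
        = fun ω => ⟪β, Z ω⟫ ^ 4 * (1/4) - ⟪β, Z ω⟫ ^ 2 * (1/2) + 1/4 := by
      funext ω; ring
    rw [he]
    exact ((h40.mul_const _).sub (h20.mul_const _)).add (integrable_const _)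
  have hP1 : Integrable (fun ω => ⟪β, Z ω⟫ ^ 3 * (Y ω * ‖μ‖ + ⟪v, Z ω⟫)
      - ⟪β, Z ω⟫ * (Y ω * ‖μ‖ + ⟪v, Z ω⟫)) P := h31.sub h11
  have hP2 : Integrable (fun ω => ⟪β, Z ω⟫ ^ 2 * (Y ω * ‖μ‖ + ⟪v, Z ω⟫) ^ 2 * (3/2)
      - (Y ω * ‖μ‖ + ⟪v, Z ω⟫) ^ 2 * (1/2)) P := (h22.mul_const _).sub (h02.mul_const _)
  have hP3 : Integrable (fun ω => ⟪β, Z ω⟫ * (Y ω * ‖μ‖ + ⟪v, Z ω⟫) ^ 3) P := h13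
  have hP4 : Integrable (fun ω => (Y ω * ‖μ‖ + ⟪v, Z ω⟫) ^ 4 * (1/4)) P := h04.mul_const _
  have key : ∀ t : ℝ, (∫ ω, hq (⟪β, Z ω⟫ + t * (Y ω * ‖μ‖ + ⟪v, Z ω⟫)) ∂P)
      = (∫ ω, (⟪β, Z ω⟫ ^ 2 - 1) ^ 2 / 4 ∂P)
        + (∫ ω, ⟪β, Z ω⟫ ^ 3 * (Y ω * ‖μ‖ + ⟪v, Z ω⟫)
            - ⟪β, Z ω⟫ * (Y ω * ‖μ‖ + ⟪v, Z ω⟫) ∂P) * t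
        + (∫ ω, ⟪β, Z ω⟫ ^ 2 * (Y ω * ‖μ‖ + ⟪v, Z ω⟫) ^ 2 * (3/2)
            - (Y ω * ‖μ‖ + ⟪v, Z ω⟫) ^ 2 * (1/2) ∂P) * t ^ 2
        + (∫ ω, ⟪β, Z ω⟫ * (Y ω * ‖μ‖ + ⟪v, Z ω⟫) ^ 3 ∂P) * t ^ 3
        + (∫ ω, (Y ω * ‖μ‖ + ⟪v, Z ω⟫) ^ 4 * (1/4) ∂P) * t ^ 4 := by
    intro t
    have hptw : (fun ω => hq (⟪β, Z ω⟫ + t * (Y ω * ‖μ‖ + ⟪v, Z ω⟫)))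
        = fun ω => (⟪β, Z ω⟫ ^ 2 - 1) ^ 2 / 4
          + ((⟪β, Z ω⟫ ^ 3 * (Y ω * ‖μ‖ + ⟪v, Z ω⟫)
              - ⟪β, Z ω⟫ * (Y ω * ‖μ‖ + ⟪v, Z ω⟫)) * t
            + ((⟪β, Z ω⟫ ^ 2 * (Y ω * ‖μ‖ + ⟪v, Z ω⟫) ^ 2 * (3/2)
                - (Y ω * ‖μ‖ + ⟪v, Z ω⟫) ^ 2 * (1/2)) * t ^ 2
              + (⟪β, Z ω⟫ * (Y ω * ‖μ‖ + ⟪v, Z ω⟫) ^ 3 * t ^ 3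
                + (Y ω * ‖μ‖ + ⟪v, Z ω⟫) ^ 4 * (1/4) * t ^ 4))) := by
      funext ω; simp only [hq]; ring
    have hI1 := hP1.mul_const t
    have hI2 := hP2.mul_const (t ^ 2)
    have hI3 := hP3.mul_const (t ^ 3)
    have hI4 := hP4.mul_const (t ^ 4)
    have hI34 : Integrable (fun ω => ⟪β, Z ω⟫ * (Y ω * ‖μ‖ + ⟪v, Z ω⟫) ^ 3 * t ^ 3
        + (Y ω * ‖μ‖ + ⟪v, Z ω⟫) ^ 4 * (1/4) * t ^ 4) P := hI3.add hI4
    have hI234 : Integrable (fun ω => (⟪β, Z ω⟫ ^ 2 * (Y ω * ‖μ‖ + ⟪v, Z ω⟫) ^ 2 * (3/2)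
        - (Y ω * ‖μ‖ + ⟪v, Z ω⟫) ^ 2 * (1/2)) * t ^ 2
        + (⟪β, Z ω⟫ * (Y ω * ‖μ‖ + ⟪v, Z ω⟫) ^ 3 * t ^ 3
          + (Y ω * ‖μ‖ + ⟪v, Z ω⟫) ^ 4 * (1/4) * t ^ 4)) P := hI2.add hI34
    have hI1234 : Integrable (fun ω => (⟪β, Z ω⟫ ^ 3 * (Y ω * ‖μ‖ + ⟪v, Z ω⟫)
        - ⟪β, Z ω⟫ * (Y ω * ‖μ‖ + ⟪v, Z ω⟫)) * t
        + ((⟪β, Z ω⟫ ^ 2 * (Y ω * ‖μ‖ + ⟪v, Z ω⟫) ^ 2 * (3/2)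
            - (Y ω * ‖μ‖ + ⟪v, Z ω⟫) ^ 2 * (1/2)) * t ^ 2
          + (⟪β, Z ω⟫ * (Y ω * ‖μ‖ + ⟪v, Z ω⟫) ^ 3 * t ^ 3
            + (Y ω * ‖μ‖ + ⟪v, Z ω⟫) ^ 4 * (1/4) * t ^ 4))) P := hI1.add hI234
    rw [hptw, integral_add hP0 hI1234, integral_add hI1 hI234, integral_add hI2 hI34,
      integral_add hI3 hI4, integral_mul_const, integral_mul_const, integral_mul_const,
      integral_mul_const]
    ring
  rw [hfun, funext key, iteratedDeriv_two_quartic]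
  -- now compute the second-order coefficient
  have hEY : (∫ ω, Y ω ∂P) = 0 := expY_eq_zero P hY hYpm hY1 hY2
  have hC2 : (∫ ω, ⟪β, Z ω⟫ ^ 2 * (Y ω * ‖μ‖ + ⟪v, Z ω⟫) ^ 2 * (3/2)
      - (Y ω * ‖μ‖ + ⟪v, Z ω⟫) ^ 2 * (1/2) ∂P)
      = (∫ ω, ⟪β, Z ω⟫ ^ 2 * (Y ω * ‖μ‖ + ⟪v, Z ω⟫) ^ 2 ∂P) * (3/2)
        - (∫ ω, (Y ω * ‖μ‖ + ⟪v, Z ω⟫) ^ 2 ∂P) * (1/2) := by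
    rw [integral_sub (h22.mul_const _) (h02.mul_const _), integral_mul_const,
      integral_mul_const]
  -- second moment of b
  have hIYv : Integrable (fun ω => Y ω * ⟪v, Z ω⟫) P := by
    refine Integrable.mono' ((integrable_const 1).add
      ((integrable_inner_pow4 P hZsg v).add (integrable_inner_pow4 P hZsg v)))
      (hY.mul (measurable_const.inner hZ)).aestronglyMeasurable
      (ae_of_all _ fun ω => ?_)
    have hb := abs_monomial_le ⟪v, Z ω⟫ ⟪v, Z ω⟫ (show 0 + 1 ≤ 4 by norm_num)
    simp only [pow_zero, pow_one, one_mul] at hb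
    simp only [Pi.add_apply, Real.norm_eq_abs]
    rcases hYpm ω with h | h <;> rw [h]
    · rw [one_mul]; linarith
    · rw [neg_one_mul, abs_neg]; linarith
  have hvv : Integrable (fun ω => ⟪v, Z ω⟫ * ⟪v, Z ω⟫) P := by
    have := integrable_inner_monomial P hZ hZsg v v (show 1 + 1 ≤ 4 by norm_num)
    simpa using this
  have hI02 : (∫ ω, (Y ω * ‖μ‖ + ⟪v, Z ω⟫) ^ 2 ∂P) = ‖μ‖ ^ 2 + 1 := by
    have hbsq : (fun ω => (Y ω * ‖μ‖ + ⟪v, Z ω⟫) ^ 2)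
        = fun ω => ‖μ‖ ^ 2 + ((Y ω * ⟪v, Z ω⟫) * (2 * ‖μ‖) + ⟪v, Z ω⟫ * ⟪v, Z ω⟫) := by
      funext ω; rcases hYpm ω with h | h <;> rw [h] <;> ring
    rw [hbsq]
    have hI2' : Integrable (fun ω => (Y ω * ⟪v, Z ω⟫) * (2 * ‖μ‖) + ⟪v, Z ω⟫ * ⟪v, Z ω⟫) P :=
      (hIYv.mul_const _).add hvv
    rw [integral_add (integrable_const _) hI2', integral_add (hIYv.mul_const _) hvv,
      integral_mul_const, hZcov v v]
    have h0 : (∫ ω, Y ω * ⟪v, Z ω⟫ ∂P) = 0 := by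
      have := indep_mul_zero P hY hZ hindep hEY (fun z => ⟪v, z⟫)
        (measurable_const.inner measurable_id)
      simpa using this
    rw [h0]
    have : ⟪v, v⟫ = 1 := by rw [real_inner_self_eq_norm_sq, hv1]; norm_num
    simp [this, hv1]
  -- mixed fourth moment
  have hYa2v : Integrable (fun ω => Y ω * (⟪β, Z ω⟫ ^ 2 * ⟪v, Z ω⟫)) P := by
    refine Integrable.mono' ((integrable_const 1).add
      ((integrable_inner_pow4 P hZsg β).add (integrable_inner_pow4 P hZsg v)))
      (hY.mul (((measurable_const.inner hZ).pow_const 2).mul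
        (measurable_const.inner hZ))).aestronglyMeasurable
      (ae_of_all _ fun ω => ?_)
    have hb := abs_monomial_le ⟪β, Z ω⟫ ⟪v, Z ω⟫ (show 2 + 1 ≤ 4 by norm_num)
    simp only [pow_one] at hb
    simp only [Pi.add_apply, Real.norm_eq_abs]
    rcases hYpm ω with h | h <;> rw [h]
    · rw [one_mul]; linarith
    · rw [neg_one_mul, abs_neg]; linarith
  have ha2v2 : Integrable (fun ω => ⟪β, Z ω⟫ ^ 2 * ⟪v, Z ω⟫ ^ 2) P :=
    integrable_inner_monomial P hZ hZsg β v (show 2 + 2 ≤ 4 by norm_num)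
  have hβZ2 : (∫ ω, ⟪β, Z ω⟫ ^ 2 ∂P) = ‖β‖ ^ 2 := by
    have he : (fun ω => ⟪β, Z ω⟫ ^ 2) = fun ω => ⟪β, Z ω⟫ * ⟪β, Z ω⟫ := by
      funext ω; ring
    rw [he, hZcov β β, real_inner_self_eq_norm_sq]
  have hI22 : (∫ ω, ⟪β, Z ω⟫ ^ 2 * (Y ω * ‖μ‖ + ⟪v, Z ω⟫) ^ 2 ∂P)
      = ‖μ‖ ^ 2 * ‖β‖ ^ 2 + (∫ ω, ⟪β, Z ω⟫ ^ 2 * ⟪v, Z ω⟫ ^ 2 ∂P) := by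
    have hab : (fun ω => ⟪β, Z ω⟫ ^ 2 * (Y ω * ‖μ‖ + ⟪v, Z ω⟫) ^ 2)
        = fun ω => ⟪β, Z ω⟫ ^ 2 * ‖μ‖ ^ 2
          + ((Y ω * (⟪β, Z ω⟫ ^ 2 * ⟪v, Z ω⟫)) * (2 * ‖μ‖)
            + ⟪β, Z ω⟫ ^ 2 * ⟪v, Z ω⟫ ^ 2) := by
      funext ω; rcases hYpm ω with h | h <;> rw [h] <;> ring
    rw [hab]
    have hI2' : Integrable (fun ω => (Y ω * (⟪β, Z ω⟫ ^ 2 * ⟪v, Z ω⟫)) * (2 * ‖μ‖)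
        + ⟪β, Z ω⟫ ^ 2 * ⟪v, Z ω⟫ ^ 2) P := (hYa2v.mul_const _).add ha2v2
    rw [integral_add (h20.mul_const _) hI2', integral_add (hYa2v.mul_const _) ha2v2,
      integral_mul_const, integral_mul_const, hβZ2]
    have h0 : (∫ ω, Y ω * (⟪β, Z ω⟫ ^ 2 * ⟪v, Z ω⟫) ∂P) = 0 := by
      have := indep_mul_zero P hY hZ hindep hEY (fun z => ⟪β, z⟫ ^ 2 * ⟪v, z⟫)
        (((measurable_const.inner measurable_id).pow_const 2).mul
          (measurable_const.inner measurable_id))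
      simpa using this
    rw [h0]
    ring
  rw [hC2, hI22, hI02]
  -- final case analysis
  rcases hcase with hβ | hβ0
  · -- ‖β‖² = 1/MZ, β ≠ 0
    have hβne : β ≠ 0 := by
      intro h0
      rw [h0] at hβ
      simp at hβ
      exact absurd hβ.symm (by positivity)
    have hβn0 : ‖β‖ ≠ 0 := norm_ne_zero_iff.mpr hβne
    set a' : Vec d := ‖β‖⁻¹ • β with ha'
    have ha'1 : ‖a'‖ = 1 := by
      rw [ha', norm_smul, norm_inv, norm_norm, inv_mul_cancel₀ hβn0]
    have ha'v : ⟪a', v⟫ = 0 := by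
      rw [ha', real_inner_smul_left, hβv, mul_zero]
    have hcross := cross_moment P hZ hZsg hMZ a' v ha'1 hv1 ha'v
    have hE4 : (∫ ω, ⟪β, Z ω⟫ ^ 2 * ⟪v, Z ω⟫ ^ 2 ∂P) = ‖β‖ ^ 2 * (MZ / 3) := by
      have hβa : ∀ ω, ⟪β, Z ω⟫ = ‖β‖ * ⟪a', Z ω⟫ := by
        intro ω
        rw [ha', real_inner_smul_left]
        field_simp
      have he : (fun ω => ⟪β, Z ω⟫ ^ 2 * ⟪v, Z ω⟫ ^ 2)
          = fun ω => ‖β‖ ^ 2 * (⟪a', Z ω⟫ ^ 2 * ⟪v, Z ω⟫ ^ 2) := by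
        funext ω; rw [hβa ω]; ring
      rw [he, integral_const_mul, hcross]
    rw [hE4, hβ]
    have hMZne : MZ ≠ 0 := hMZ0.ne'
    have : 2 * ((‖μ‖ ^ 2 * (1 / MZ) + 1 / MZ * (MZ / 3)) * (3 / 2)
        - (‖μ‖ ^ 2 + 1) * (1 / 2)) = -(1 - 3 / MZ) * ‖μ‖ ^ 2 := by
      field_simp
      ring
    rw [this]
  · -- β = 0
    rw [hβ0]
    simp only [inner_zero_left, norm_zero]
    have hzero : (∫ ω, (0:ℝ) ^ 2 * ⟪v, Z ω⟫ ^ 2 ∂P) = 0 := by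
      simp
    rw [hzero]
    have h3MZ : 0 < 3 / MZ := by positivity
    nlinarith [sq_nonneg ‖μ‖, mul_pos h3MZ (pow_pos hμn 2)]
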